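/- Let γ be a consistent family of grafts for a tree T, each graft in γ having bounded chains, and let H = hybr(T,γ). Then for every branch B of H, the set B ∩ supp(T,γ) is H-cofinal in B: every element of B lies below some element of B ∩ supp(T,γ). Moreover, for any G ∈ γ with B ∩ nodes(G) ≠ ∅, the set B ∩ nodes(G) is a branch of G. -/

import Mathlib

universe u u' v

/-- A set-theoretic tree: a strict partial order on a set of nodes in which
the set of strict predecessors of every node is linearly ordered and
well-founded (i.e. well-ordered). -/
structure STree (α : Type u) where
  nodes : Set α
  lt : α → α → Prop
  lt_mem_left : ∀ {x y}, lt x y → x ∈ nodes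
  lt_mem_right : ∀ {x y}, lt x y → y ∈ nodes
  lt_irrefl : ∀ x, ¬ lt x x
  lt_trans : ∀ {x y z}, lt x y → lt y z → lt x z
  pred_linear : ∀ {x v w}, lt v x → lt w x → lt v w ∨ v = w ∨ lt w v
  pred_wf : ∀ {x : α} (A : Set α), (∀ a ∈ A, lt a x) → A.Nonempty →
      ∃ m ∈ A, ∀ a ∈ A, ¬ lt a m

namespace STree

variable {α : Type u} {α' : Type u'} {β : Type v}

/-- The associated (non-strict) order, restricted to nodes. -/
def le (T : STree α) (x y : α) : Prop := T.lt x y ∨ (x = y ∧ x ∈ T.nodes)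

def IsChain (T : STree α) (C : Set α) : Prop :=
  C ⊆ T.nodes ∧ ∀ x ∈ C, ∀ y ∈ C, T.le x y ∨ T.le y x

/-- A branch is a ⊆-maximal chain. -/
def IsBranch (T : STree α) (B : Set α) : Prop :=
  T.IsChain B ∧ ∀ C, T.IsChain C → B ⊆ C → B = C

/-- Two nodes are incomparable. -/
def Incomp (T : STree α) (x y : α) : Prop :=
  x ∈ T.nodes ∧ y ∈ T.nodes ∧ ¬ T.le x y ∧ ¬ T.le y x

/-- `s` is a son (immediate successor) of `x`. -/
def IsSon (T : STree α) (x s : α) : Prop :=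
  T.lt x s ∧ ¬ ∃ v, T.lt x v ∧ T.lt v s

def sons (T : STree α) (x : α) : Set α := {s | T.IsSon x s}

def IsMax (T : STree α) (m : α) : Prop := m ∈ T.nodes ∧ ∀ v, ¬ T.lt m v

def maxNodes (T : STree α) : Set α := {m | T.IsMax m}

def minNodes (T : STree α) : Set α := {m | m ∈ T.nodes ∧ ∀ v, ¬ T.lt v m}

/-- `r` is the least node of `T`. -/
def IsRoot (T : STree α) (r : α) : Prop := r ∈ T.nodes ∧ ∀ x ∈ T.nodes, T.le r x

def roots (T : STree α) : Set α := {r | T.IsRoot r}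

/-- The strict predecessors of a node. -/
def pred (T : STree α) (x : α) : Set α := {v | T.lt v x}

/-- `{v : v ≤ m}`. -/
def below (T : STree α) (m : α) : Set α := {v | T.le v m}

/-- `{v : v ≥ m}`. -/
def above (T : STree α) (m : α) : Set α := {v | T.le m v}

/-- Every nonempty chain has an upper bound among the nodes. -/
def BoundedChains (T : STree α) : Prop :=
  ∀ C, T.IsChain C → C.Nonempty → ∃ z ∈ T.nodes, ∀ c ∈ C, T.le c z

/-- Height at most ω: each node has only finitely many strict predecessors. -/
def HeightLeOmega (T : STree α) : Prop := ∀ x ∈ T.nodes, (T.pred x).Finite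

/-- No maximal nodes. -/
def NoMax (T : STree α) : Prop := ∀ m ∈ T.nodes, ∃ v, T.lt m v

/-- Every non-maximal node has exactly ℵ₀ sons. -/
def Aleph0Branching (T : STree α) : Prop :=
  ∀ x ∈ T.nodes, ¬ T.IsMax x → (T.sons x).Countable ∧ (T.sons x).Infinite

/-- Every non-maximal node has exactly κ sons. -/
def Branching (T : STree α) (κ : Cardinal.{u}) : Prop :=
  ∀ x ∈ T.nodes, ¬ T.IsMax x → Cardinal.mk (T.sons x) = κ

/-- The strict order (proper initial segment) on finite sequences of naturals. -/
def listLt (x y : List ℕ) : Prop := x <+: y ∧ x ≠ y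

/-- `T` is order-isomorphic to the tree `(ℕ^{<ω}, ⊂)` of all finite sequences of
naturals ordered by proper extension. -/
def IsoToSeqTree (T : STree α) : Prop :=
  ∃ f : α → List ℕ, Set.BijOn f T.nodes Set.univ ∧
    ∀ x ∈ T.nodes, ∀ y ∈ T.nodes, (T.lt x y ↔ listLt (f x) (f y))

/-! ### Foliage trees: a tree together with a leaf (a set) at each node. -/

/-- Larger nodes have smaller leaves. -/
def Nonincreasing (T : STree α) (leaf : α → Set β) : Prop :=
  ∀ {x y}, T.le x y → leaf y ⊆ leaf x

/-- Incomparable nodes have disjoint leaves. -/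
def Splittable (T : STree α) (leaf : α → Set β) : Prop :=
  ∀ {x y}, T.Incomp x y → leaf x ∩ leaf y = ∅

/-- The leaf of each non-maximal node is the disjoint union of the leaves of its sons. -/
def LocallyStrict (T : STree α) (leaf : α → Set β) : Prop :=
  ∀ x ∈ T.nodes, ¬ T.IsMax x →
    (leaf x = ⋃ s ∈ T.sons x, leaf s) ∧
    (∀ s ∈ T.sons x, ∀ s' ∈ T.sons x, s ≠ s' → leaf s ∩ leaf s' = ∅)

/-- The union of all leaves. -/
def flesh (T : STree α) (leaf : α → Set β) : Set β := ⋃ x ∈ T.nodes, leaf x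

/-- The intersection of leaves over a set of nodes. -/
def fruit (leaf : α → Set β) (A : Set α) : Set β := ⋂ x ∈ A, leaf x

/-- The union, over all branches, of the intersections of leaves along a branch. -/
def yield (T : STree α) (leaf : α → Set β) : Set β :=
  ⋃ B ∈ {B | T.IsBranch B}, fruit leaf B

/-- The intersection of leaves along any branch is a singleton. -/
def StrictBranches (T : STree α) (leaf : α → Set β) : Prop :=
  T.nodes.Nonempty ∧ ∀ B, T.IsBranch B → ∃ q, fruit leaf B = {q}

/-- All leaves are open. -/
def OpenLeaves (T : STree α) [TopologicalSpace β] (leaf : α → Set β) : Prop :=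
  ∀ x ∈ T.nodes, IsOpen (leaf x)

/-- The nodes whose leaf contains `p`. -/
def scope (T : STree α) (leaf : α → Set β) (p : β) : Set α :=
  {y | y ∈ T.nodes ∧ p ∈ leaf y}

/-- The family of unions of leaves over cofinite subsets of the sons of `z`. -/
def shoot (T : STree α) (leaf : α → Set β) (z : α) : Set (Set β) :=
  {U | ∃ C ⊆ T.sons z, (T.sons z \ C).Finite ∧ U = ⋃ s ∈ C, leaf s}

/-- `γ` π-refines `δ`: every nonempty member of `δ` contains a nonempty member of `γ`. -/
def PiRefines (γ δ : Set (Set β)) : Prop :=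
  ∀ D ∈ δ, D ≠ ∅ → ∃ G ∈ γ, G ≠ ∅ ∧ G ⊆ D

/-- The foliage tree grows into the subspace `Y`: for every `p ∈ Y` and every
neighbourhood `U` of `p` in the subspace `Y`, some `z ∈ scope(p)` has
`shoot(z)` π-refining `{U}`. -/
def GrowsInto (T : STree α) (leaf : α → Set β) [TopologicalSpace β] (Y : Set β) : Prop :=
  ∀ p ∈ Y, ∀ U : Set β, U ⊆ Y → U ∈ nhdsWithin p Y →
    ∃ z ∈ T.scope leaf p, PiRefines (T.shoot leaf z) {U}

/-- `H` shoots into `F`. -/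
def ShootsInto (H : STree α) (leafH : α → Set β) (F : STree α') (leafF : α' → Set β) : Prop :=
  ∀ p ∈ flesh H leafH, ∀ y ∈ F.scope leafF p,
    ∃ x ∈ H.scope leafH p, PiRefines (H.shoot leafH x) (F.shoot leafF y)

/-! ### Grafts and hybrids. -/

/-- The implant of a graft: its nodes other than the root and the maximal nodes. -/
def implant (G : STree α) : Set α := G.nodes \ (G.roots ∪ G.maxNodes)

/-- `G` is a graft for the tree `T`. -/
def IsGraft (T G : STree α) : Prop :=
  (∃ x ∈ G.nodes, ∃ y ∈ G.nodes, x ≠ y) ∧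
  (∃ r, G.IsRoot r) ∧
  G.roots ⊆ T.nodes ∧
  G.maxNodes ⊆ T.nodes ∧
  (∀ r ∈ G.roots, ∀ m ∈ G.maxNodes, T.lt r m) ∧
  (∀ m ∈ G.maxNodes, ∀ m' ∈ G.maxNodes, m ≠ m' → T.Incomp m m') ∧
  implant G ∩ T.nodes = ∅

/-- The explant of `T` and `G`: the strict `T`-successors of the root of `G`
not lying above any maximal node of `G`. -/
def explant (T G : STree α) : Set α :=
  {v | ∃ r ∈ G.roots, T.lt r v} \ ⋃ m ∈ G.maxNodes, T.above m

/-- A consistent family of grafts for `T`. -/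
def ConsistentGrafts (T : STree α) (γ : Set (STree α)) : Prop :=
  (∀ G ∈ γ, IsGraft T G) ∧
  (∀ D ∈ γ, ∀ E ∈ γ, D ≠ E → implant D ∩ implant E = ∅) ∧
  (∀ D ∈ γ, ∀ E ∈ γ, D ≠ E → ∀ rD ∈ D.roots, ∀ rE ∈ E.roots,
      T.Incomp rD rE ∨ (∃ m ∈ E.maxNodes, T.le m rD) ∨ (∃ m ∈ D.maxNodes, T.le m rE))

/-- The support of `T` for `γ`. -/
def supp (T : STree α) (γ : Set (STree α)) : Set α :=
  T.nodes \ ⋃ G ∈ γ, explant T G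

/-- The node set of the hybrid of `T` and `γ`. -/
def hybridNodes (T : STree α) (γ : Set (STree α)) : Set α :=
  supp T γ ∪ ⋃ G ∈ γ, implant G

/-- The union of `<_T` and the `<_G` (`G ∈ γ`), restricted to the hybrid nodes. -/
def hybridBase (T : STree α) (γ : Set (STree α)) (x y : α) : Prop :=
  x ∈ hybridNodes T γ ∧ y ∈ hybridNodes T γ ∧ (T.lt x y ∨ ∃ G ∈ γ, G.lt x y)

/-- The hybrid order: the transitive closure of `hybridBase`. -/
def hybridLt (T : STree α) (γ : Set (STree α)) (x y : α) : Prop :=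
  Relation.TransGen (hybridBase T γ) x y

/-! ### Foliage grafts and the foliage hybrid. -/

/-- `(G, leafG)` is a foliage graft for the nonincreasing foliage tree `(T, leafF)`. -/
def IsFGraft (T : STree α) (leafF : α → Set β) (G : STree α) (leafG : α → Set β) : Prop :=
  Nonincreasing G leafG ∧ IsGraft T G ∧
  (∀ r ∈ G.roots, leafG r ⊆ leafF r) ∧
  (∀ m ∈ G.maxNodes, leafG m = leafF m)

/-- The cut from `(T, leafF)` by the foliage graft `(G, leafG)`. -/
def cut (leafF : α → Set β) (G : STree α) (leafG : α → Set β) : Set β :=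
  ⋃ r ∈ G.roots, leafF r \ leafG r

/-- A consistent family of foliage grafts for `(T, leafF)`. -/
def ConsistentFGrafts (T : STree α) (leafF : α → Set β)
    (φ : Set (STree α × (α → Set β))) : Prop :=
  (∀ p ∈ φ, IsFGraft T leafF p.1 p.2) ∧
  (∀ p ∈ φ, ∀ q ∈ φ, p ≠ q → p.1 ≠ q.1) ∧
  ConsistentGrafts T (Prod.fst '' φ)

/-- The loss of `(T, leafF)` on `φ`. -/
def loss (leafF : α → Set β) (φ : Set (STree α × (α → Set β))) : Set β :=
  ⋃ p ∈ φ, cut leafF p.1 p.2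

/-! ### The Baire space and the standard foliage tree. -/

/-- The basic clopen set of the Baire space determined by a finite sequence. -/
def Scyl (x : List ℕ) : Set (ℕ → ℕ) := {p | ∀ i : Fin x.length, p i.1 = x.get i}

/-- A π-dense subset of the Baire space. -/
def PiDense (A : Set (ℕ → ℕ)) : Prop :=
  ∀ y : List ℕ, {n : ℕ | Scyl (y ++ [n]) ⊆ A}.Infinite

end STree
namespace STree

variable {α : Type u}

section Basic

variable {T : STree α}

theorem le_refl'' (T : STree α) {x : α} (hx : x ∈ T.nodes) : T.le x x :=
  Or.inr ⟨rfl, hx⟩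

theorem le_trans'' (T : STree α) {x y z : α} (h1 : T.le x y) (h2 : T.le y z) :
    T.le x z := by
  rcases h1 with h1 | ⟨rfl, hx⟩
  · rcases h2 with h2 | ⟨rfl, _⟩
    · exact Or.inl (T.lt_trans h1 h2)
    · exact Or.inl h1
  · exact h2

theorem lt_of_le_of_lt'' (T : STree α) {x y z : α} (h1 : T.le x y) (h2 : T.lt y z) :
    T.lt x z := by
  rcases h1 with h1 | ⟨rfl, _⟩
  · exact T.lt_trans h1 h2
  · exact h2

theorem lt_of_lt_of_le'' (T : STree α) {x y z : α} (h1 : T.lt x y) (h2 : T.le y z) :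
    T.lt x z := by
  rcases h2 with h2 | ⟨rfl, _⟩
  · exact T.lt_trans h1 h2
  · exact h1

theorem root_unique' (T : STree α) {r r' : α} (h : r ∈ T.roots) (h' : r' ∈ T.roots) :
    r = r' := by
  have h1 : T.le r r' := h.2 r' h'.1
  have h2 : T.le r' r := h'.2 r h.1
  rcases h1 with h1 | ⟨rfl, _⟩
  · rcases h2 with h2 | ⟨rfl, _⟩
    · exact absurd (T.lt_trans h1 h2) (T.lt_irrefl r)
    · rfl
  · rfl

theorem not_root_of_lt (T : STree α) {u v : α} (h : T.lt u v) (hv : v ∈ T.roots) :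
    False := by
  rcases hv.2 u (T.lt_mem_left h) with h2 | ⟨rfl, _⟩
  · exact T.lt_irrefl v (T.lt_trans h2 h)
  · exact T.lt_irrefl v h

theorem max_mem_nodes (T : STree α) {m : α} (hm : m ∈ T.maxNodes) : m ∈ T.nodes := hm.1

theorem mem_implant_iff {G : STree α} {u : α} :
    u ∈ implant G ↔ u ∈ G.nodes ∧ u ∉ G.roots ∧ u ∉ G.maxNodes := by
  simp only [implant, Set.mem_diff, Set.mem_union]
  tauto

theorem root_le (G : STree α) {r v : α} (hr : r ∈ G.roots) (hv : v ∈ G.nodes) :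
    G.le r v := hr.2 v hv

end Basic

section Hybrid

variable {T : STree α} {γ : Set (STree α)}

theorem implant_not_T (hγ : ConsistentGrafts T γ) {G : STree α} (hG : G ∈ γ)
    {u : α} (hu : u ∈ implant G) : u ∉ T.nodes := fun hT => by
  have := (hγ.1 G hG).2.2.2.2.2.2
  exact absurd (Set.mem_inter hu hT) (by rw [this]; exact Set.notMem_empty u)

theorem nodes_cases {G : STree α} {u : α} (hu : u ∈ G.nodes) :
    u ∈ G.roots ∨ u ∈ implant G ∨ u ∈ G.maxNodes := by
  by_cases h1 : u ∈ G.roots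
  · exact Or.inl h1
  by_cases h2 : u ∈ G.maxNodes
  · exact Or.inr (Or.inr h2)
  · exact Or.inr (Or.inl (mem_implant_iff.2 ⟨hu, h1, h2⟩))

theorem roots_subset_supp (hγ : ConsistentGrafts T γ) {G : STree α} (hG : G ∈ γ) :
    G.roots ⊆ supp T γ := by
  intro r hr
  refine ⟨(hγ.1 G hG).2.2.1 hr, ?_⟩
  intro hmem
  rw [Set.mem_iUnion₂] at hmem
  obtain ⟨E, hE, ⟨⟨rE, hrE, hlt⟩, hnab⟩⟩ := hmem
  by_cases hEG : E = G
  · subst hEG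
    exact T.lt_irrefl r (root_unique' E hrE hr ▸ hlt)
  · rcases hγ.2.2 G hG E hE (fun h => hEG h.symm) r hr rE hrE with hinc | ⟨m, hm, hle⟩ | ⟨m, hm, hle⟩
    · exact hinc.2.2.2 (Or.inl hlt)
    · exact hnab (Set.mem_iUnion₂.2 ⟨m, hm, hle⟩)
    · have h1 : T.lt r m := (hγ.1 G hG).2.2.2.2.1 r hr m hm
      have h2 : T.lt m r := T.lt_of_le_of_lt'' hle hlt
      exact T.lt_irrefl r (T.lt_trans h1 h2)

theorem max_subset_supp (hγ : ConsistentGrafts T γ) {G : STree α} (hG : G ∈ γ) :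
    G.maxNodes ⊆ supp T γ := by
  intro m hm
  refine ⟨(hγ.1 G hG).2.2.2.1 hm, ?_⟩
  intro hmem
  rw [Set.mem_iUnion₂] at hmem
  obtain ⟨E, hE, ⟨⟨rE, hrE, hltE⟩, hnab⟩⟩ := hmem
  by_cases hEG : E = G
  · subst hEG
    exact hnab (Set.mem_iUnion₂.2 ⟨m, hm, le_refl'' T ((hγ.1 E hE).2.2.2.1 hm)⟩)
  · obtain ⟨rG, hrG⟩ := (hγ.1 G hG).2.1
    have hrGm : rG ∈ G.roots := hrG
    have hlt2 : T.lt rG m := (hγ.1 G hG).2.2.2.2.1 rG hrGm m hm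
    rcases hγ.2.2 G hG E hE (fun h => hEG h.symm) rG hrGm rE hrE with hinc | ⟨m', hm', hle⟩ | ⟨m', hm', hle⟩
    · rcases T.pred_linear hlt2 hltE with h | h | h
      · exact hinc.2.2.1 (Or.inl h)
      · exact hinc.2.2.1 (Or.inr ⟨h, T.lt_mem_left hlt2⟩)
      · exact hinc.2.2.2 (Or.inl h)
    · exact hnab (Set.mem_iUnion₂.2 ⟨m', hm', T.le_trans'' hle (Or.inl hlt2)⟩)
    · have hlt3 : T.lt m' m := T.lt_of_le_of_lt'' hle hltE
      by_cases h : m' = m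
      · exact T.lt_irrefl m (h ▸ hlt3)
      · exact ((hγ.1 G hG).2.2.2.2.2.1 m hm m' hm' (fun e => h e.symm)).2.2.2 (Or.inl hlt3)

theorem Gnodes_subset_hybrid (hγ : ConsistentGrafts T γ) {G : STree α} (hG : G ∈ γ) :
    G.nodes ⊆ hybridNodes T γ := by
  intro u hu
  rcases nodes_cases hu with h | h | h
  · exact Or.inl (roots_subset_supp hγ hG h)
  · exact Or.inr (Set.mem_iUnion₂.2 ⟨G, hG, h⟩)
  · exact Or.inl (max_subset_supp hγ hG h)

theorem base_of_glt (hγ : ConsistentGrafts T γ) {G : STree α} (hG : G ∈ γ)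
    {a b : α} (h : G.lt a b) : hybridBase T γ a b :=
  ⟨Gnodes_subset_hybrid hγ hG (G.lt_mem_left h),
   Gnodes_subset_hybrid hγ hG (G.lt_mem_right h), Or.inr ⟨G, hG, h⟩⟩

theorem hyb_of_glt (hγ : ConsistentGrafts T γ) {G : STree α} (hG : G ∈ γ)
    {a b : α} (h : G.lt a b) : hybridLt T γ a b :=
  Relation.TransGen.single (base_of_glt hγ hG h)

theorem step_from_impl (hγ : ConsistentGrafts T γ) {G : STree α} (hG : G ∈ γ)
    {u v : α} (hu : u ∈ implant G) (h : hybridBase T γ u v) : G.lt u v := by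
  rcases h.2.2 with hT | ⟨G', hG', hlt'⟩
  · exact absurd (T.lt_mem_left hT) (implant_not_T hγ hG hu)
  · have huT : u ∉ T.nodes := implant_not_T hγ hG hu
    have hu' : u ∈ implant G' := by
      refine mem_implant_iff.2 ⟨G'.lt_mem_left hlt', fun hr => huT ((hγ.1 G' hG').2.2.1 hr),
        fun hm => huT ((hγ.1 G' hG').2.2.2.1 hm)⟩
    by_cases hGG : G' = G
    · exact hGG ▸ hlt'
    · have := hγ.2.1 G hG G' hG' (fun e => hGG e.symm)
      exact absurd (Set.mem_inter (mem_implant_iff.2 ((mem_implant_iff.1 hu))) hu')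
        (by rw [this]; exact Set.notMem_empty u)

theorem no_two_roots (hγ : ConsistentGrafts T γ) {G G' : STree α} (hG : G ∈ γ)
    (hG' : G' ∈ γ) (hne : G ≠ G') {x : α} (h : x ∈ G.roots) (h' : x ∈ G'.roots) :
    False := by
  rcases hγ.2.2 G hG G' hG' hne x h x h' with hinc | ⟨m, hm, hle⟩ | ⟨m, hm, hle⟩
  · exact hinc.2.2.1 (le_refl'' T ((hγ.1 G hG).2.2.1 h))
  · have : T.lt x m := (hγ.1 G' hG').2.2.2.2.1 x h' m hm
    exact T.lt_irrefl x (T.lt_of_lt_of_le'' this hle)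
  · have : T.lt x m := (hγ.1 G hG).2.2.2.2.1 x h m hm
    exact T.lt_irrefl x (T.lt_of_lt_of_le'' this hle)

theorem explant_escape (hγ : ConsistentGrafts T γ) {G : STree α} (hG : G ∈ γ)
    {x z : α} (hx : x ∈ G.roots) (hz : z ∈ hybridNodes T γ) (h : T.lt x z) :
    ∃ m ∈ G.maxNodes, T.le m z := by
  rcases hz with hs | hi
  · by_contra hcon
    push_neg at hcon
    refine hs.2 (Set.mem_iUnion₂.2 ⟨G, hG, ⟨⟨x, hx, h⟩, ?_⟩⟩)
    intro hab
    rw [Set.mem_iUnion₂] at hab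
    obtain ⟨m, hm, hmz⟩ := hab
    exact hcon m hm hmz
  · rw [Set.mem_iUnion₂] at hi
    obtain ⟨E, hE, hzE⟩ := hi
    exact absurd (T.lt_mem_right h) (implant_not_T hγ hE hzE)

end Hybrid

end STree

namespace STree

variable {α : Type u}

section Hybrid2

variable {T : STree α} {γ : Set (STree α)}

/-- `a` is a `T`-shadow of the hybrid node `u`. -/
def Shad (T : STree α) (γ : Set (STree α)) (u a : α) : Prop :=
  (u ∈ T.nodes ∧ a = u) ∨ ∃ G ∈ γ, u ∈ implant G ∧ a ∈ G.roots

theorem shad_exists (hγ : ConsistentGrafts T γ) {u : α} (hu : u ∈ hybridNodes T γ) :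
    ∃ a, Shad T γ u a := by
  rcases hu with hs | hi
  · exact ⟨u, Or.inl ⟨hs.1, rfl⟩⟩
  · rw [Set.mem_iUnion₂] at hi
    obtain ⟨G, hG, huG⟩ := hi
    obtain ⟨r, hr⟩ := (hγ.1 G hG).2.1
    exact ⟨r, Or.inr ⟨G, hG, huG, hr⟩⟩

theorem shad_self (hγ : ConsistentGrafts T γ) {u a : α} (hu : u ∈ T.nodes)
    (h : Shad T γ u a) : a = u := by
  rcases h with ⟨_, rfl⟩ | ⟨G, hG, hui, _⟩
  · rfl
  · exact absurd hu (implant_not_T hγ hG hui)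

theorem shad_root (hγ : ConsistentGrafts T γ) {G : STree α} (hG : G ∈ γ)
    {u a : α} (hu : u ∈ implant G) (h : Shad T γ u a) : a ∈ G.roots := by
  rcases h with ⟨huT, _⟩ | ⟨G', hG', hui, ha⟩
  · exact absurd huT (implant_not_T hγ hG hu)
  · by_cases hGG : G' = G
    · exact hGG ▸ ha
    · have := hγ.2.1 G hG G' hG' (fun e => hGG e.symm)
      exact absurd (Set.mem_inter hu hui)
        (by rw [this]; exact Set.notMem_empty u)

theorem shad_base (hγ : ConsistentGrafts T γ) {u v a b : α}
    (h : hybridBase T γ u v) (ha : Shad T γ u a) (hb : Shad T γ v b) : T.le a b := by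
  rcases h.2.2 with hT | ⟨G, hG, hlt'⟩
  · rw [shad_self hγ (T.lt_mem_left hT) ha, shad_self hγ (T.lt_mem_right hT) hb]
    exact Or.inl hT
  · have huG : u ∈ G.nodes := G.lt_mem_left hlt'
    have hvG : v ∈ G.nodes := G.lt_mem_right hlt'
    have haroot : a ∈ G.roots := by
      rcases nodes_cases huG with h1 | h1 | h1
      · rwa [shad_self hγ ((hγ.1 G hG).2.2.1 h1) ha]
      · exact shad_root hγ hG h1 ha
      · exact absurd hlt' (h1.2 v)
    rcases nodes_cases hvG with h1 | h1 | h1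
    · exact absurd (not_root_of_lt G hlt' h1) (fun f => f)
    · have hbroot : b ∈ G.roots := shad_root hγ hG h1 hb
      rw [root_unique' G haroot hbroot]
      exact le_refl'' T ((hγ.1 G hG).2.2.1 hbroot)
    · rw [shad_self hγ ((hγ.1 G hG).2.2.2.1 h1) hb]
      exact Or.inl ((hγ.1 G hG).2.2.2.2.1 a haroot v h1)

theorem shad_hyb (hγ : ConsistentGrafts T γ) {u v : α} (h : hybridLt T γ u v) :
    ∀ a b, Shad T γ u a → Shad T γ v b → T.le a b := by
  induction h with
  | single h => exact fun a b ha hb => shad_base hγ h ha hb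
  | tail h1 h2 ih =>
    intro a b ha hb
    obtain ⟨c, hc⟩ := shad_exists hγ h2.1
    exact T.le_trans'' (ih a c ha hc) (shad_base hγ h2 hc hb)

theorem base_step (hγ : ConsistentGrafts T γ) {G : STree α} (hG : G ∈ γ)
    {x z : α} (hb : hybridBase T γ x z) (hx : x ∈ G.nodes) :
    (z ∈ G.nodes ∧ G.lt x z) ∨
      ∃ m ∈ G.maxNodes, G.le x m ∧ (m = z ∨ hybridLt T γ m z) := by
  rcases nodes_cases hx with hr | hi | hm
  · rcases hb.2.2 with hT | ⟨G', hG', hlt'⟩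
    · obtain ⟨m, hm, hle⟩ := explant_escape hγ hG hr hb.2.1 hT
      refine Or.inr ⟨m, hm, root_le G hr hm.1, ?_⟩
      rcases hle with hlt2 | ⟨rfl, _⟩
      · exact Or.inr (Relation.TransGen.single
          ⟨Or.inl (max_subset_supp hγ hG hm), hb.2.1, Or.inl hlt2⟩)
      · exact Or.inl rfl
    · by_cases hGG : G' = G
      · subst hGG
        exact Or.inl ⟨G'.lt_mem_right hlt', hlt'⟩
      · have hxT : x ∈ T.nodes := (hγ.1 G hG).2.2.1 hr
        have hx' : x ∈ G'.roots := by
          rcases nodes_cases (G'.lt_mem_left hlt') with h1 | h1 | h1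
          · exact h1
          · exact absurd hxT (implant_not_T hγ hG' h1)
          · exact absurd hlt' (h1.2 z)
        exact absurd (no_two_roots hγ hG hG' (fun e => hGG e.symm) hr hx') (fun f => f)
  · exact Or.inl ⟨G.lt_mem_right (step_from_impl hγ hG hi hb), step_from_impl hγ hG hi hb⟩
  · exact Or.inr ⟨x, hm, le_refl'' G hx, Or.inr (Relation.TransGen.single hb)⟩

theorem exitLe (hγ : ConsistentGrafts T γ) {G : STree α} (hG : G ∈ γ)
    {x y : α} (h : hybridLt T γ x y) :
    x ∈ G.nodes →
      (y ∈ G.nodes ∧ G.lt x y) ∨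
        ∃ m ∈ G.maxNodes, G.le x m ∧ (m = y ∨ hybridLt T γ m y) := by
  induction h using Relation.TransGen.head_induction_on with
  | single hb => exact fun hx => base_step hγ hG hb hx
  | head hb ht iht =>
    intro hx
    rcases base_step hγ hG hb hx with ⟨hcG, hxc⟩ | ⟨m, hm, hxm, hr⟩
    · rcases iht hcG with ⟨hyG, hcy⟩ | ⟨m, hm, hcm, hr⟩
      · exact Or.inl ⟨hyG, G.lt_trans hxc hcy⟩
      · exact Or.inr ⟨m, hm, Or.inl (G.lt_of_lt_of_le'' hxc hcm), hr⟩
    · rcases hr with rfl | hmc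
      · exact Or.inr ⟨m, hm, hxm, Or.inr ht⟩
      · exact Or.inr ⟨m, hm, hxm, Or.inr (hmc.trans ht)⟩

theorem keyG (hγ : ConsistentGrafts T γ) (hirr : ∀ w, ¬ hybridLt T γ w w)
    {G : STree α} (hG : G ∈ γ) {x y : α} (hx : x ∈ G.nodes) (hy : y ∈ G.nodes)
    (h : hybridLt T γ x y) : G.lt x y := by
  rcases exitLe hγ hG h hx with ⟨_, hxy⟩ | ⟨m, hm, hxm, hr⟩
  · exact hxy
  rcases hr with rfl | hmy
  · rcases hxm with hxm | ⟨rfl, _⟩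
    · exact hxm
    · exact absurd h (hirr x)
  -- derive a contradiction from hybridLt m y with m a max node and y ∈ G.nodes
  exfalso
  have hmT : m ∈ T.nodes := (hγ.1 G hG).2.2.2.1 hm
  have hsm : Shad T γ m m := Or.inl ⟨hmT, rfl⟩
  rcases nodes_cases hy with h1 | h1 | h1
  · have hle : T.le m y := shad_hyb hγ hmy m y hsm (Or.inl ⟨(hγ.1 G hG).2.2.1 h1, rfl⟩)
    have hltym : T.lt y m := (hγ.1 G hG).2.2.2.2.1 y h1 m hm
    exact T.lt_irrefl m (T.lt_of_le_of_lt'' hle hltym)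
  · obtain ⟨r, hrr⟩ := (hγ.1 G hG).2.1
    have hle : T.le m r := shad_hyb hγ hmy m r hsm (Or.inr ⟨G, hG, h1, hrr⟩)
    have hltrm : T.lt r m := (hγ.1 G hG).2.2.2.2.1 r hrr m hm
    exact T.lt_irrefl m (T.lt_of_le_of_lt'' hle hltrm)
  · by_cases hmyeq : m = y
    · exact hirr m (hmyeq ▸ hmy)
    · have hle : T.le m y := shad_hyb hγ hmy m y hsm (Or.inl ⟨(hγ.1 G hG).2.2.2.1 h1, rfl⟩)
      exact ((hγ.1 G hG).2.2.2.2.2.1 m hm y h1 hmyeq).2.2.1 hle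

end Hybrid2

section Branch

theorem branch_insert (H : STree α) {B : Set α} {c : α} (hB : H.IsBranch B)
    (h : H.IsChain (insert c B)) : c ∈ B := by
  have := hB.2 _ h (Set.subset_insert c B)
  rw [this]
  exact Set.mem_insert c B

theorem insert_chain (H : STree α) {B : Set α} (hB : H.IsBranch B) {c : α}
    (hcN : c ∈ H.nodes) (hcomp : ∀ b' ∈ B, H.le b' c ∨ H.le c b') :
    H.IsChain (insert c B) := by
  refine ⟨?_, ?_⟩
  · intro x hx
    rcases hx with rfl | hx
    · exact hcN
    · exact hB.1.1 hx
  · intro x hx y hy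
    rcases hx with rfl | hx <;> rcases hy with rfl | hy
    · exact Or.inl (Or.inr ⟨rfl, hcN⟩)
    · exact (hcomp y hy).symm
    · exact hcomp x hx
    · exact hB.1.2 x hx y hy

theorem branch_lower (H : STree α) {B : Set α} {u b' : α} (hB : H.IsBranch B)
    (hb' : b' ∈ B) (h : H.lt u b') : u ∈ B := by
  refine branch_insert H hB (insert_chain H hB (H.lt_mem_left h) ?_)
  intro x hx
  rcases hB.1.2 x hx b' hb' with h2 | h2
  · rcases h2 with h2 | ⟨rfl, _⟩
    · rcases H.pred_linear h h2 with h3 | h3 | h3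
      · exact Or.inr (Or.inl h3)
      · exact Or.inr (Or.inr ⟨h3, H.lt_mem_left h⟩)
      · exact Or.inl (Or.inl h3)
    · exact Or.inr (Or.inl h)
  · exact Or.inr (Or.inl (H.lt_of_lt_of_le'' h h2))

theorem exists_max_above {G : STree α} (hbc : G.BoundedChains) {z : α}
    (hz : z ∈ G.nodes) : ∃ m ∈ G.maxNodes, G.le z m := by
  have hbound : ∀ c, _root_.IsChain (fun a b : {v // v ∈ G.nodes ∧ G.le z v} => G.le a.1 b.1) c →
      ∃ ub : {v // v ∈ G.nodes ∧ G.le z v}, ∀ a ∈ c, G.le a.1 ub.1 := by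
    intro c hc
    by_cases hne : c.Nonempty
    · obtain ⟨v₀, hv₀⟩ := hne
      have hch : G.IsChain (Subtype.val '' c) := by
        refine ⟨?_, ?_⟩
        · rintro x ⟨a, _, rfl⟩
          exact a.2.1
        · rintro x ⟨a, ha, rfl⟩ y ⟨b, hb, rfl⟩
          by_cases hab : a = b
          · subst hab
            exact Or.inl (le_refl'' G a.2.1)
          · exact hc ha hb hab
      obtain ⟨w, hw, hub⟩ := hbc (Subtype.val '' c) hch ⟨v₀.1, ⟨v₀, hv₀, rfl⟩⟩
      have hzw : G.le z w := G.le_trans'' v₀.2.2 (hub v₀.1 ⟨v₀, hv₀, rfl⟩)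
      exact ⟨⟨w, hw, hzw⟩, fun a ha => hub a.1 ⟨a, ha, rfl⟩⟩
    · rw [Set.not_nonempty_iff_eq_empty] at hne
      subst hne
      exact ⟨⟨z, hz, le_refl'' G hz⟩, fun a ha => absurd ha (Set.notMem_empty a)⟩
  obtain ⟨m, hm⟩ := exists_maximal_of_chains_bounded
    (r := fun a b : {v // v ∈ G.nodes ∧ G.le z v} => G.le a.1 b.1) hbound
    (fun h1 h2 => G.le_trans'' h1 h2)
  refine ⟨m.1, ⟨m.2.1, fun v hv => ?_⟩, m.2.2⟩
  have hvN : v ∈ G.nodes := G.lt_mem_right hv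
  have hzv : G.le z v := G.le_trans'' m.2.2 (Or.inl hv)
  have := hm ⟨v, hvN, hzv⟩ (Or.inl hv)
  rcases this with h2 | ⟨h2, _⟩
  · exact G.lt_irrefl m.1 (G.lt_trans hv h2)
  · exact G.lt_irrefl m.1 (h2 ▸ hv)

end Branch

end STree

/-- If every graft of the consistent family `γ` has bounded chains
and `B` is a branch of the hybrid `H`, then `B ∩ supp(T,γ)` is H-cofinal in `B`,
and for every `G ∈ γ` meeting `B`, the set `B ∩ nodes(G)` is a branch of `G`. -/
theorem hybrid_branch {α : Type u} (T : STree α) (γ : Set (STree α)) (H : STree α)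
    (hγ : STree.ConsistentGrafts T γ)
    (hbc : ∀ G ∈ γ, STree.BoundedChains G)
    (hn : H.nodes = STree.hybridNodes T γ)
    (hlt : ∀ x y, H.lt x y ↔ STree.hybridLt T γ x y)
    (B : Set α) (hB : H.IsBranch B) :
    (∀ b ∈ B, ∃ a ∈ B ∩ STree.supp T γ, H.le b a) ∧
    (∀ G ∈ γ, (B ∩ G.nodes).Nonempty → G.IsBranch (B ∩ G.nodes)) := by
  have hNB : B ⊆ H.nodes := hB.1.1
  have hirr : ∀ w, ¬ STree.hybridLt T γ w w := fun w h => H.lt_irrefl w ((hlt w w).2 h)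
  have hHltG : ∀ {G : STree α}, G ∈ γ → ∀ {a b : α}, G.lt a b → H.lt a b := by
    intro G hG a b h
    exact (hlt _ _).2 (STree.hyb_of_glt hγ hG h)
  have hHleG : ∀ {G : STree α}, G ∈ γ → ∀ {a b : α}, G.le a b → H.le a b := by
    intro G hG a b h
    rcases h with h | ⟨rfl, ha⟩
    · exact Or.inl (hHltG hG h)
    · exact Or.inr ⟨rfl, hn ▸ STree.Gnodes_subset_hybrid hγ hG ha⟩
  have hGchain : ∀ G ∈ γ, G.IsChain (B ∩ G.nodes) := by
    intro G hG
    refine ⟨fun x hx => hx.2, ?_⟩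
    intro x hx y hy
    rcases hB.1.2 x hx.1 y hy.1 with h | h
    · rcases h with h | ⟨rfl, _⟩
      · exact Or.inl (Or.inl (STree.keyG hγ hirr hG hx.2 hy.2 ((hlt x y).1 h)))
      · exact Or.inl (STree.le_refl'' G hx.2)
    · rcases h with h | ⟨rfl, _⟩
      · exact Or.inr (Or.inl (STree.keyG hγ hirr hG hy.2 hx.2 ((hlt y x).1 h)))
      · exact Or.inl (STree.le_refl'' G hx.2)
  constructor
  · intro b hb
    have hbN : b ∈ STree.hybridNodes T γ := hn ▸ hNB hb
    rcases hbN with hs | hi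
    · exact ⟨b, ⟨hb, hs⟩, STree.le_refl'' H (hNB hb)⟩
    · rw [Set.mem_iUnion₂] at hi
      obtain ⟨G, hG, hbG⟩ := hi
      have hbGn : b ∈ G.nodes := (STree.mem_implant_iff.1 hbG).1
      obtain ⟨z, hzG, hzub⟩ := hbc G hG (B ∩ G.nodes) (hGchain G hG) ⟨b, hb, hbGn⟩
      obtain ⟨m, hmmax, hzm⟩ := STree.exists_max_above (hbc G hG) hzG
      have hub : ∀ x ∈ B ∩ G.nodes, G.le x m := fun x hx => G.le_trans'' (hzub x hx) hzm
      have hbneq : b ≠ m := fun e =>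
        STree.implant_not_T hγ hG hbG (e ▸ ((hγ.1 G hG).2.2.2.1 hmmax))
      have hGbm : G.lt b m := by
        rcases hub b ⟨hb, hbGn⟩ with h | ⟨h, _⟩
        · exact h
        · exact absurd h hbneq
      have hHbm : H.lt b m := hHltG hG hGbm
      have hmN : m ∈ H.nodes := hn ▸ Or.inl (STree.max_subset_supp hγ hG hmmax)
      have hcomp : ∀ b' ∈ B, H.le b' m ∨ H.le m b' := by
        intro b' hb'
        by_cases hb'G : b' ∈ G.nodes
        · exact Or.inl (hHleG hG (hub b' ⟨hb', hb'G⟩))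
        · rcases hB.1.2 b' hb' b hb with h | h
          · exact Or.inl (Or.inl (H.lt_of_le_of_lt'' h hHbm))
          · rcases h with h | ⟨rfl, _⟩
            · rcases STree.exitLe hγ hG ((hlt b b').1 h) hbGn with ⟨hyG, _⟩ | ⟨m', hm', _, hr⟩
              · exact absurd hyG hb'G
              · rcases hr with rfl | hmb'
                · exact absurd hm'.1 hb'G
                · have hm'B : m' ∈ B := STree.branch_lower H hB hb' ((hlt m' b').2 hmb')
                  have hle' : G.le m' m := hub m' ⟨hm'B, hm'.1⟩
                  have hm'm : m' = m := by
                    rcases hle' with h2 | ⟨h2, _⟩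
                    · exact absurd h2 (hm'.2 m)
                    · exact h2
                  exact Or.inr (Or.inl ((hlt m b').2 (hm'm ▸ hmb')))
            · exact absurd hbGn hb'G
      have hmB : m ∈ B := STree.branch_insert H hB (STree.insert_chain H hB hmN hcomp)
      exact ⟨m, ⟨hmB, STree.max_subset_supp hγ hG hmmax⟩, Or.inl hHbm⟩
  · rintro G hG ⟨x₀, hx₀B, hx₀G⟩
    refine ⟨hGchain G hG, ?_⟩
    intro C hC hsub
    refine Set.Subset.antisymm hsub ?_
    intro c hcC
    have hcG : c ∈ G.nodes := hC.1 hcC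
    have hcomp : ∀ b' ∈ B, H.le b' c ∨ H.le c b' := by
      intro b' hb'
      by_cases hb'G : b' ∈ G.nodes
      · rcases hC.2 b' (hsub ⟨hb', hb'G⟩) c hcC with h | h
        · exact Or.inl (hHleG hG h)
        · exact Or.inr (hHleG hG h)
      · rcases hB.1.2 b' hb' x₀ hx₀B with h | h
        · rcases hC.2 x₀ (hsub ⟨hx₀B, hx₀G⟩) c hcC with h2 | h2
          · exact Or.inl (H.le_trans'' h (hHleG hG h2))
          · rcases h2 with h2 | ⟨h2, _⟩
            · rcases h with h | ⟨rfl, _⟩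
              · rcases H.pred_linear h (hHltG hG h2) with h3 | h3 | h3
                · exact Or.inl (Or.inl h3)
                · exact Or.inl (Or.inr ⟨h3, H.lt_mem_left h⟩)
                · exact Or.inr (Or.inl h3)
              · exact absurd hx₀G hb'G
            · exact Or.inl (h2 ▸ h)
        · rcases h with h | ⟨rfl, _⟩
          · rcases STree.exitLe hγ hG ((hlt x₀ b').1 h) hx₀G with ⟨hyG, _⟩ | ⟨m, hm, _, hr⟩
            · exact absurd hyG hb'G
            · rcases hr with rfl | hmb'
              · exact absurd hm.1 hb'G
              · have hmB : m ∈ B := STree.branch_lower H hB hb' ((hlt m b').2 hmb')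
                rcases hC.2 c hcC m (hsub ⟨hmB, hm.1⟩) with h2 | h2
                · exact Or.inr (H.le_trans'' (hHleG hG h2) (Or.inl ((hlt m b').2 hmb')))
                · have hmc : m = c := by
                    rcases h2 with h2 | ⟨h2, _⟩
                    · exact absurd h2 (hm.2 c)
                    · exact h2
                  exact Or.inr (Or.inl ((hlt c b').2 (hmc ▸ hmb')))
          · exact absurd hx₀G hb'G
    have hcB : c ∈ B := STree.branch_insert H hB
      (STree.insert_chain H hB (hn ▸ STree.Gnodes_subset_hybrid hγ hG hcG) hcomp)
    exact ⟨hcB, hcG⟩
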